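/- Let C be a box of width w and height h, and let I be a finite set of rectangles such that each rectangle i in I has width w_i ≤ εw and height h_i ≤ εh for some ε ∈ (0,1). Then the Next-Fit-Decreasing-Height algorithm packs into C a subset I'' ⊆ I whose total area satisfies a(I'') ≥ min{a(I), (1−2ε)·w·h}. In particular, if a(I) ≤ (1−2ε)·w·h, then all rectangles of I are packed. -/

import Mathlib

open Finset

/-- `x y` give the bottom-left corners of an axis-aligned, non-overlapping packing of the
rectangles indexed by `s` (with widths `w` and heights `h`) inside a `W × H` box. -/
def IsPacking {ι : Type*} (s : Finset ι) (w h : ι → ℝ) (W H : ℝ) (x y : ι → ℝ) : Prop :=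
  (∀ i ∈ s, 0 ≤ x i ∧ x i + w i ≤ W ∧ 0 ≤ y i ∧ y i + h i ≤ H) ∧
  (∀ i ∈ s, ∀ j ∈ s, i ≠ j →
    x i + w i ≤ x j ∨ x j + w j ≤ x i ∨ y i + h i ≤ y j ∨ y j + h j ≤ y i)

namespace NFDH

variable {ι : Type*}

/-- Next-fit decreasing height on a (sorted) list, starting from state
`(cx, cy, sh)` = (current x-offset, current shelf bottom, current shelf height).
Returns the placed rectangles with their positions, and the unplaced suffix. -/
noncomputable def run (w h : ι → ℝ) (W H : ℝ) : List ι → ℝ → ℝ → ℝ → List (ι × ℝ × ℝ) × List ι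
  | [], _, _, _ => ([], [])
  | i :: l, cx, cy, sh =>
    if cx + w i ≤ W then
      let r := run w h W H l (cx + w i) cy sh
      ((i, cx, cy) :: r.1, r.2)
    else if cy + sh + h i ≤ H then
      let r := run w h W H l (w i) (cy + sh) (h i)
      ((i, 0, cy + sh) :: r.1, r.2)
    else ([], i :: l)

variable {w h : ι → ℝ} {W H : ℝ}

theorem run_nil (w h : ι → ℝ) (W H cx cy sh : ℝ) : run w h W H [] cx cy sh = ([], []) := by
  rw [run]

theorem run_cons (w h : ι → ℝ) (W H : ℝ) (i : ι) (l : List ι) (cx cy sh : ℝ) :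
    run w h W H (i :: l) cx cy sh =
    if cx + w i ≤ W then
      ((i, cx, cy) :: (run w h W H l (cx + w i) cy sh).1, (run w h W H l (cx + w i) cy sh).2)
    else if cy + sh + h i ≤ H then
      ((i, 0, cy + sh) :: (run w h W H l (w i) (cy + sh) (h i)).1,
        (run w h W H l (w i) (cy + sh) (h i)).2)
    else ([], i :: l) := by
  rw [run]

theorem run_split (l : List ι) (cx cy sh : ℝ) :
    ((run w h W H l cx cy sh).1.map Prod.fst) ++ (run w h W H l cx cy sh).2 = l := by
  induction l generalizing cx cy sh with
  | nil => simp [run_nil]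
  | cons i l ih =>
    rw [run_cons]
    split
    · simpa using ih (cx + w i) cy sh
    · split
      · simpa using ih (w i) (cy + sh) (h i)
      · simp

/-- Geometry of placements: every placed rectangle is either in the current shelf
(to the right of `cx`) or in a higher shelf. -/
theorem run_geom {l : List ι} (cx cy sh : ℝ) (hw : ∀ j ∈ l, 0 ≤ w j ∧ 0 ≤ h j) :
    ∀ q ∈ (run w h W H l cx cy sh).1, (q.2.2 = cy ∧ cx ≤ q.2.1) ∨ cy + sh ≤ q.2.2 := by
  induction l generalizing cx cy sh with
  | nil => simp [run_nil]
  | cons i l ih =>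
    rw [run_cons]
    split
    · rintro q hq
      rcases List.mem_cons.1 hq with hq | hq
      · subst hq; exact Or.inl ⟨rfl, le_refl _⟩
      · rcases ih (cx + w i) cy sh (fun j hj => hw j (.tail _ hj)) q hq with ⟨h1, h2⟩ | h1
        · exact Or.inl ⟨h1, le_trans (le_add_of_nonneg_right (hw i (.head l)).1) h2⟩
        · exact Or.inr h1
    · split
      · rintro q hq
        rcases List.mem_cons.1 hq with hq | hq
        · subst hq; right; simp
        · rcases ih (w i) (cy + sh) (h i) (fun j hj => hw j (.tail _ hj)) q hq with ⟨h1, _⟩ | h1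
          · right; rw [h1]
          · right; linarith [(hw i (.head l)).2]
      · rintro q hq; simp at hq

/-- All placed rectangles lie inside the box. -/
theorem run_inbox {l : List ι} (cx cy sh : ℝ)
    (hsort : l.Pairwise fun a b => h b ≤ h a)
    (hw : ∀ j ∈ l, 0 ≤ w j ∧ w j ≤ W ∧ 0 ≤ h j ∧ h j ≤ sh)
    (hcx : 0 ≤ cx) (hcy : 0 ≤ cy) (hsh : 0 ≤ sh) (hH : cy + sh ≤ H) :
    ∀ q ∈ (run w h W H l cx cy sh).1,
      0 ≤ q.2.1 ∧ q.2.1 + w q.1 ≤ W ∧ 0 ≤ q.2.2 ∧ q.2.2 + h q.1 ≤ H := by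
  induction l generalizing cx cy sh with
  | nil => simp [run_nil]
  | cons i l ih =>
    have hwi := hw i (.head l)
    rw [run_cons]
    split
    · rename_i hfit
      rintro q hq
      rcases List.mem_cons.1 hq with hq | hq
      · subst hq
        refine ⟨hcx, hfit, hcy, ?_⟩
        show cy + h i ≤ H
        linarith [hwi.2.2.2]
      · exact ih (cx + w i) cy sh hsort.of_cons
          (fun j hj => hw j (.tail _ hj)) (by linarith [hwi.1]) hcy hsh hH q hq
    · split
      · rename_i hfit
        rintro q hq
        rcases List.mem_cons.1 hq with hq | hq
        · subst hq
          refine ⟨le_refl 0, ?_, ?_, ?_⟩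
          · show 0 + w i ≤ W; linarith [hwi.2.1]
          · show (0:ℝ) ≤ cy + sh; linarith
          · show cy + sh + h i ≤ H; exact hfit
        · exact ih (w i) (cy + sh) (h i) hsort.of_cons
            (fun j hj => ⟨(hw j (.tail _ hj)).1, (hw j (.tail _ hj)).2.1,
              (hw j (.tail _ hj)).2.2.1, List.rel_of_pairwise_cons hsort hj⟩)
            hwi.1 (by linarith) hwi.2.2.1 hfit q hq
      · rintro q hq; simp at hq

/-- Placed rectangles are pairwise non-overlapping. -/
theorem run_disj {l : List ι} (cx cy sh : ℝ)
    (hsort : l.Pairwise fun a b => h b ≤ h a)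
    (hw : ∀ j ∈ l, 0 ≤ w j ∧ 0 ≤ h j ∧ h j ≤ sh) :
    ∀ q ∈ (run w h W H l cx cy sh).1, ∀ q' ∈ (run w h W H l cx cy sh).1, q.1 ≠ q'.1 →
      q.2.1 + w q.1 ≤ q'.2.1 ∨ q'.2.1 + w q'.1 ≤ q.2.1 ∨
      q.2.2 + h q.1 ≤ q'.2.2 ∨ q'.2.2 + h q'.1 ≤ q.2.2 := by
  induction l generalizing cx cy sh with
  | nil => simp [run_nil]
  | cons i l ih =>
    have hwi := hw i (.head l)
    rw [run_cons]
    split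
    · rename_i hfit
      have hgeom := run_geom (w := w) (h := h) (W := W) (H := H) (cx + w i) cy sh
        (fun j hj => ⟨(hw j (.tail _ hj)).1, (hw j (.tail _ hj)).2.1⟩)
      rintro q hq q' hq' hne
      rcases List.mem_cons.1 hq with hq | hq <;> rcases List.mem_cons.1 hq' with hq' | hq'
      · exact absurd (by rw [hq, hq']) hne
      · subst hq
        rcases hgeom q' hq' with ⟨h1, h2⟩ | h1
        · left; exact h2
        · right; right; left
          show cy + h i ≤ q'.2.2
          linarith [hwi.2.2]
      · subst hq'
        rcases hgeom q hq with ⟨h1, h2⟩ | h1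
        · right; left; exact h2
        · right; right; right
          show cy + h i ≤ q.2.2
          linarith [hwi.2.2]
      · exact ih (cx + w i) cy sh hsort.of_cons (fun j hj => hw j (.tail _ hj)) q hq q' hq' hne
    · split
      · rename_i hfit
        have hw' : ∀ j ∈ l, 0 ≤ w j ∧ 0 ≤ h j ∧ h j ≤ h i :=
          fun j hj => ⟨(hw j (.tail _ hj)).1, (hw j (.tail _ hj)).2.1,
            List.rel_of_pairwise_cons hsort hj⟩
        have hgeom := run_geom (w := w) (h := h) (W := W) (H := H) (w i) (cy + sh) (h i)
          (fun j hj => ⟨(hw' j hj).1, (hw' j hj).2.1⟩)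
        rintro q hq q' hq' hne
        rcases List.mem_cons.1 hq with hq | hq <;> rcases List.mem_cons.1 hq' with hq' | hq'
        · exact absurd (by rw [hq, hq']) hne
        · subst hq
          rcases hgeom q' hq' with ⟨h1, h2⟩ | h1
          · left; show (0:ℝ) + w i ≤ q'.2.1; linarith
          · right; right; left
            show cy + sh + h i ≤ q'.2.2
            exact h1
        · subst hq'
          rcases hgeom q hq with ⟨h1, h2⟩ | h1
          · right; left; show (0:ℝ) + w i ≤ q.2.1; linarith
          · right; right; right
            show cy + sh + h i ≤ q.2.2
            exact h1
        · exact ih (w i) (cy + sh) (h i) hsort.of_cons hw' q hq q' hq' hne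
      · rintro q hq; simp at hq

/-- The key area bound: if the run (on a nonempty sorted list, headed by `j`) fails with
first unplaced rectangle `i`, then the placed area together with `cx · h j` is at least
`(1-ε)W` times the remaining height of the box. -/
theorem run_area {ε : ℝ} (hεW : 0 ≤ (1 - ε) * W) :
    ∀ (l : List ι) (cx cy sh : ℝ), (l.Pairwise fun a b => h b ≤ h a) →
      (∀ a ∈ l, 0 ≤ w a ∧ w a ≤ ε * W ∧ 0 ≤ h a) → 0 ≤ cx →
      ∀ j l' p i rest, l = j :: l' → run w h W H l cx cy sh = (p, i :: rest) →
      (1 - ε) * W * (H - (cy + sh)) ≤ ((p.map fun q => w q.1 * h q.1).sum + cx * h j) := by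
  intro l
  induction l with
  | nil =>
    intro cx cy sh _ _ _ j l' p i rest heq _
    exact absurd heq (by simp)
  | cons j l ih =>
    intro cx cy sh hsort hw hcx j₀ l' p i rest heq hrun
    injection heq with h1 h2
    subst h1; subst h2
    have hwj := hw j (.head l)
    rw [run_cons] at hrun
    split at hrun
    · rename_i hfit
      have hp := congrArg Prod.fst hrun
      have hr2 := congrArg Prod.snd hrun
      simp only at hp hr2
      cases l with
      | nil => rw [run_nil] at hr2; simp at hr2
      | cons j' l'' =>
        have hrec : run w h W H (j' :: l'') (cx + w j) cy sh =
            ((run w h W H (j' :: l'') (cx + w j) cy sh).1, i :: rest) := by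
          rw [← hr2]
        have hIH := ih (cx + w j) cy sh hsort.of_cons (fun a ha => hw a (.tail _ ha))
          (by linarith [hwj.1]) j' l'' _ i rest rfl hrec
        have hj'le : h j' ≤ h j := List.rel_of_pairwise_cons hsort (.head l'')
        subst hp
        simp only [List.map_cons, List.sum_cons]
        have e1 : cx * h j' ≤ cx * h j := mul_le_mul_of_nonneg_left hj'le hcx
        have e2 : w j * h j' ≤ w j * h j := mul_le_mul_of_nonneg_left hj'le hwj.1
        linarith
    · split at hrun
      · rename_i hnofit hfit
        have hp := congrArg Prod.fst hrun
        have hr2 := congrArg Prod.snd hrun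
        simp only at hp hr2
        have hwgood : (1 - ε) * W ≤ cx := by linarith [lt_of_not_ge hnofit, hwj.2.1]
        cases l with
        | nil => rw [run_nil] at hr2; simp at hr2
        | cons j' l'' =>
          have hrec : run w h W H (j' :: l'') (w j) (cy + sh) (h j) =
              ((run w h W H (j' :: l'') (w j) (cy + sh) (h j)).1, i :: rest) := by
            rw [← hr2]
          have hIH := ih (w j) (cy + sh) (h j) hsort.of_cons (fun a ha => hw a (.tail _ ha))
            hwj.1 j' l'' _ i rest rfl hrec
          have hj'le : h j' ≤ h j := List.rel_of_pairwise_cons hsort (.head l'')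
          subst hp
          simp only [List.map_cons, List.sum_cons]
          have e1 : (1 - ε) * W * h j ≤ cx * h j :=
            mul_le_mul_of_nonneg_right hwgood hwj.2.2
          have e2 : w j * h j' ≤ w j * h j := mul_le_mul_of_nonneg_left hj'le hwj.1
          nlinarith
      · rename_i hnofitx hnofity
        have hp := congrArg Prod.fst hrun
        have hr2 := congrArg Prod.snd hrun
        simp only at hp hr2
        injection hr2 with h1 h2
        subst h1
        have hwgood : (1 - ε) * W ≤ cx := by linarith [lt_of_not_ge hnofitx, hwj.2.1]
        have hh : H - (cy + sh) ≤ h j := by linarith [lt_of_not_ge hnofity]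
        subst hp
        simp only [List.map_nil, List.sum_nil, zero_add]
        have e1 : (1 - ε) * W * (H - (cy + sh)) ≤ (1 - ε) * W * h j :=
          mul_le_mul_of_nonneg_left hh hεW
        have e2 : (1 - ε) * W * h j ≤ cx * h j :=
          mul_le_mul_of_nonneg_right hwgood hwj.2.2
        linarith



/-- From a list of placed rectangles one gets packing functions. -/
theorem exists_packing_of_list (p : List (ι × ℝ × ℝ))
    (hbox : ∀ q ∈ p, 0 ≤ q.2.1 ∧ q.2.1 + w q.1 ≤ W ∧ 0 ≤ q.2.2 ∧ q.2.2 + h q.1 ≤ H)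
    (hdisj : ∀ q ∈ p, ∀ q' ∈ p, q.1 ≠ q'.1 →
      q.2.1 + w q.1 ≤ q'.2.1 ∨ q'.2.1 + w q'.1 ≤ q.2.1 ∨
      q.2.2 + h q.1 ≤ q'.2.2 ∨ q'.2.2 + h q'.1 ≤ q.2.2)
    (t : Finset ι) (ht : ∀ a ∈ t, ∃ q ∈ p, q.1 = a) :
    ∃ x y, IsPacking t w h W H x y := by
  classical
  refine ⟨fun a => if hm : ∃ q ∈ p, q.1 = a then hm.choose.2.1 else 0,
    fun a => if hm : ∃ q ∈ p, q.1 = a then hm.choose.2.2 else 0, ?_, ?_⟩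
  · intro a ha
    have hm := ht a ha
    have hc := hm.choose_spec
    have hb := hbox hm.choose hc.1
    rw [hc.2] at hb
    simp only [dif_pos hm]
    exact hb
  · intro a ha b hb hab
    have hma := ht a ha
    have hmb := ht b hb
    have hca := hma.choose_spec
    have hcb := hmb.choose_spec
    have hne : hma.choose.1 ≠ hmb.choose.1 := by rw [hca.2, hcb.2]; exact hab
    have hd := hdisj hma.choose hca.1 hmb.choose hcb.1 hne
    rw [hca.2, hcb.2] at hd
    simp only [dif_pos hma, dif_pos hmb]
    exact hd

end NFDH

/-- **NFDH packing lemma.**  If every rectangle of the finite set `s` has width at most `ε·W`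
and height at most `ε·H` (with `ε ∈ (0,1)`), then some subset `s'' ⊆ s` can be packed into the
`W × H` box with total area at least `min (a(s)) ((1-2ε)·W·H)`.  In particular, if
`a(s) ≤ (1-2ε)·W·H` then all rectangles of `s` can be packed. -/
theorem nfdh_packs_large_area {ι : Type*} (s : Finset ι) (w h : ι → ℝ)
    (W H ε : ℝ) (hW : 0 < W) (hH : 0 < H) (hε0 : 0 < ε) (hε1 : ε < 1)
    (hdim : ∀ i ∈ s, 0 < w i ∧ w i ≤ ε * W ∧ 0 < h i ∧ h i ≤ ε * H) :
    (∃ s'' ⊆ s, (∃ x y, IsPacking s'' w h W H x y) ∧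
      min (∑ i ∈ s, w i * h i) ((1 - 2 * ε) * (W * H)) ≤ ∑ i ∈ s'', w i * h i) ∧
    ((∑ i ∈ s, w i * h i) ≤ (1 - 2 * ε) * (W * H) →
      ∃ x y, IsPacking s w h W H x y) := by
  classical
  obtain ⟨l, hperm, hsort⟩ :
      ∃ l : List ι, l.Perm s.toList ∧ l.Pairwise fun a b => h b ≤ h a := by
    refine ⟨s.toList.mergeSort (fun a b => decide (h b ≤ h a)),
      List.mergeSort_perm _ _, ?_⟩
    have hs := List.pairwise_mergeSort (le := fun a b => decide (h b ≤ h a))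
      (fun a b c hab hbc => by
        simp only [decide_eq_true_eq] at *; exact le_trans hbc hab)
      (fun a b => by simpa using le_total (h b) (h a)) s.toList
    exact hs.imp fun hab => by simpa using hab
  have hmem : ∀ a, a ∈ l ↔ a ∈ s := fun a => by rw [hperm.mem_iff, Finset.mem_toList]
  have hnd : l.Nodup := hperm.nodup_iff.2 s.nodup_toList
  have hsuml : (l.map fun a => w a * h a).sum = ∑ i ∈ s, w i * h i := by
    rw [(hperm.map _).sum_eq, ← List.sum_toFinset _ s.nodup_toList, Finset.toList_toFinset]
  cases l with
  | nil =>
    have hs : s = ∅ := by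
      have := hperm.symm.eq_nil
      rwa [Finset.toList_eq_nil] at this
    subst hs
    have hpk : ∃ x y, IsPacking (∅ : Finset ι) w h W H x y :=
      ⟨fun _ => 0, fun _ => 0, by simp [IsPacking]⟩
    refine ⟨⟨∅, Finset.Subset.refl _, hpk, by simp⟩, fun _ => hpk⟩
  | cons i₀ l₁ =>
    have hd : ∀ a ∈ i₀ :: l₁, 0 < w a ∧ w a ≤ ε * W ∧ 0 < h a ∧ h a ≤ ε * H :=
      fun a ha => hdim a ((hmem a).1 ha)
    have hd0 := hd i₀ (.head l₁)
    have hεW : 0 ≤ (1 - ε) * W := by nlinarith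
    have hεH : ε * H ≤ H := by nlinarith
    have hεW' : ε * W ≤ W := by nlinarith
    have hsh : ∀ a ∈ i₀ :: l₁, h a ≤ h i₀ := by
      intro a ha
      rcases List.mem_cons.1 ha with rfl | ha
      · exact le_refl _
      · exact List.rel_of_pairwise_cons hsort ha
    set res := NFDH.run w h W H (i₀ :: l₁) 0 0 (h i₀) with hres
    have hsplit : (res.1.map Prod.fst) ++ res.2 = i₀ :: l₁ := NFDH.run_split _ _ _ _
    have hbox := NFDH.run_inbox (w := w) (h := h) (W := W) (H := H) 0 0 (h i₀) hsort
      (fun j hj => ⟨(hd j hj).1.le, (hd j hj).2.1.trans hεW', (hd j hj).2.2.1.le, hsh j hj⟩)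
      le_rfl le_rfl hd0.2.2.1.le (by simpa using hd0.2.2.2.trans hεH)
    have hdisj := NFDH.run_disj (w := w) (h := h) (W := W) (H := H) 0 0 (h i₀) hsort
      (fun j hj => ⟨(hd j hj).1.le, (hd j hj).2.2.1.le, hsh j hj⟩)
    have hndp : (res.1.map Prod.fst).Nodup := by
      have h2 := hnd
      rw [← hsplit] at h2
      exact h2.of_append_left
    set s'' := (res.1.map Prod.fst).toFinset with hs''
    have hsub : s'' ⊆ s := by
      intro a ha
      refine (hmem a).1 ?_
      rw [← hsplit]
      exact List.mem_append_left _ (List.mem_toFinset.1 ha)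
    have hpk : ∃ x y, IsPacking s'' w h W H x y := by
      refine NFDH.exists_packing_of_list res.1 hbox hdisj s'' fun a ha => ?_
      obtain ⟨q, hq, hq2⟩ := List.mem_map.1 (List.mem_toFinset.1 ha)
      exact ⟨q, hq, hq2⟩
    have hsum'' : ∑ i ∈ s'', w i * h i = (res.1.map fun q => w q.1 * h q.1).sum := by
      rw [hs'', List.sum_toFinset _ hndp, List.map_map]
      rfl
    have hsum_split : ∑ i ∈ s, w i * h i =
        (res.1.map fun q => w q.1 * h q.1).sum + (res.2.map fun a => w a * h a).sum := by
      rw [← hsuml, ← hsplit, List.map_append, List.sum_append, List.map_map]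
      rfl
    cases hleft : res.2 with
    | nil =>
      have hps : s'' = s := by
        have hmap : res.1.map Prod.fst = i₀ :: l₁ := by
          rw [← hsplit, hleft, List.append_nil]
        ext a
        rw [hs'', List.mem_toFinset, hmap, hmem]
      constructor
      · exact ⟨s'', hsub, hpk, by rw [hps]; exact min_le_left _ _⟩
      · intro _
        rw [hps] at hpk
        exact hpk
    | cons i rest =>
      have hrun_eta : NFDH.run w h W H (i₀ :: l₁) 0 0 (h i₀) = (res.1, res.2) := rfl
      rw [hleft] at hrun_eta
      have harea := NFDH.run_area (ε := ε) hεW (i₀ :: l₁) 0 0 (h i₀) hsort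
        (fun a ha => ⟨(hd a ha).1.le, (hd a ha).2.1, (hd a ha).2.2.1.le⟩)
        le_rfl i₀ l₁ res.1 i rest rfl hrun_eta
      have hbound : (1 - 2 * ε) * (W * H) ≤ (res.1.map fun q => w q.1 * h q.1).sum := by
        nlinarith [hd0.2.2.2, mul_nonneg hεW (by linarith [hd0.2.2.2] : (0:ℝ) ≤ ε * H - h i₀),
          mul_nonneg (mul_pos hW hH).le (sq_nonneg ε)]
      constructor
      · exact ⟨s'', hsub, hpk, (min_le_right _ _).trans (hsum'' ▸ hbound)⟩
      · intro hA
        exfalso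
        have hi_l : i ∈ i₀ :: l₁ := by
          rw [← hsplit, hleft]
          exact List.mem_append_right _ List.mem_cons_self
        have hdi := hd i hi_l
        have hrest_nonneg : 0 ≤ (rest.map fun a => w a * h a).sum := by
          apply List.sum_nonneg
          intro x hx
          obtain ⟨a, ha, rfl⟩ := List.mem_map.1 hx
          have hal : a ∈ i₀ :: l₁ := by
            rw [← hsplit, hleft]
            exact List.mem_append_right _ (List.mem_cons_of_mem _ ha)
          exact mul_nonneg (hd a hal).1.le (hd a hal).2.2.1.le
        have hpos : 0 < w i * h i := mul_pos hdi.1 hdi.2.2.1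
        rw [hsum_split, hleft] at hA
        simp only [List.map_cons, List.sum_cons] at hA
        linarith
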